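/- Let k ≥ 1, let S be a finite set, let * be an element not in S, and let 𝒞 be a family of subsets of S. Set S' = S ∪ {*} and 𝒞' = 𝒞 ∪ {{j,*} : j ∈ S}. Then there exist pairwise disjoint sets S_1,…,S_k with S_1 ∪ ⋯ ∪ S_k = S such that no member of 𝒞 is contained in any S_i, if and only if there exist pairwise disjoint sets T_1,…,T_{k+1} with T_1 ∪ ⋯ ∪ T_{k+1} = S' such that no member of 𝒞' is contained in any T_i. -/
import Mathlib


/-- The induction step of the NP-completeness of Set-Splitting-by-k-Sets: with
`S' = S ∪ {*}` and `𝒞' = 𝒞 ∪ {{j, *} : j ∈ S}` (where `* ∉ S`), the collection `𝒞`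
can be split by `k` disjoint sets covering `S` if and only if `𝒞'` can be split by
`k+1` disjoint sets covering `S'`. -/
theorem stmt8 {α : Type*} [DecidableEq α] (k : ℕ) (hk : 1 ≤ k)
    (S : Finset α) (star : α) (hstar : star ∉ S)
    (C : Set (Finset α)) (hC : ∀ c ∈ C, c ⊆ S) :
    (∃ T : Fin k → Finset α,
        (∀ i j : Fin k, i ≠ j → Disjoint (T i) (T j)) ∧
        Finset.univ.biUnion T = S ∧
        ∀ c ∈ C, ∀ i : Fin k, ¬ c ⊆ T i) ↔
    (∃ T : Fin (k + 1) → Finset α,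
        (∀ i j : Fin (k + 1), i ≠ j → Disjoint (T i) (T j)) ∧
        Finset.univ.biUnion T = insert star S ∧
        ∀ c ∈ (C ∪ {c' : Finset α | ∃ j ∈ S, c' = {j, star}}),
          ∀ i : Fin (k + 1), ¬ c ⊆ T i) := by
  constructor
  · rintro ⟨T, hdisj, hcov, hsplit⟩
    have hTS : ∀ i, T i ⊆ S := by
      intro i
      rw [← hcov]
      exact Finset.subset_biUnion_of_mem T (Finset.mem_univ i)
    have hdTs : ∀ i : Fin k, Disjoint (T i) ({star} : Finset α) := by
      intro i
      refine Finset.disjoint_left.2 fun x hx hx' => ?_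
      simp only [Finset.mem_singleton] at hx'
      exact hstar (hx' ▸ hTS i hx)
    refine ⟨Fin.snoc T {star}, ?_, ?_, ?_⟩
    · intro i j hij
      induction i using Fin.lastCases with
      | last =>
        induction j using Fin.lastCases with
        | last => exact absurd rfl hij
        | cast j' => simpa using (hdTs j').symm
      | cast i' =>
        induction j using Fin.lastCases with
        | last => simpa using hdTs i'
        | cast j' =>
          simp only [Fin.snoc_castSucc]
          exact hdisj i' j' fun h => hij (by rw [h])
    · ext a
      simp only [Finset.mem_biUnion, Finset.mem_univ, true_and, Finset.mem_insert]
      constructor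
      · rintro ⟨i, hi⟩
        induction i using Fin.lastCases with
        | last =>
          simp only [Fin.snoc_last, Finset.mem_singleton] at hi
          exact Or.inl hi
        | cast i' =>
          simp only [Fin.snoc_castSucc] at hi
          exact Or.inr (hTS i' hi)
      · rintro (rfl | ha)
        · exact ⟨Fin.last k, by simp⟩
        · rw [← hcov] at ha
          simp only [Finset.mem_biUnion, Finset.mem_univ, true_and] at ha
          obtain ⟨i, hi⟩ := ha
          exact ⟨i.castSucc, by simpa using hi⟩
    · rintro c (hc | ⟨j, hj, rfl⟩) i
      · induction i using Fin.lastCases with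
        | last =>
          intro hsub
          rw [Fin.snoc_last] at hsub
          have hne : c ≠ ∅ := by
            intro h
            exact hsplit c hc ⟨0, hk⟩ (h ▸ Finset.empty_subset _)
          obtain ⟨x, hx⟩ := Finset.nonempty_iff_ne_empty.2 hne
          have := hsub hx
          simp only [Finset.mem_singleton] at this
          exact hstar (this ▸ hC c hc hx)
        | cast i' =>
          intro hsub
          rw [Fin.snoc_castSucc] at hsub
          exact hsplit c hc i' hsub
      · induction i using Fin.lastCases with
        | last =>
          intro hsub
          rw [Fin.snoc_last] at hsub
          have := hsub (Finset.mem_insert_self j _)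
          simp only [Finset.mem_singleton] at this
          exact hstar (this ▸ hj)
        | cast i' =>
          intro hsub
          rw [Fin.snoc_castSucc] at hsub
          have := hsub (by simp : star ∈ ({j, star} : Finset α))
          exact hstar (hTS i' this)
  · rintro ⟨T, hdisj, hcov, hsplit⟩
    have hstar' : star ∈ Finset.univ.biUnion T := by
      rw [hcov]; exact Finset.mem_insert_self _ _
    simp only [Finset.mem_biUnion, Finset.mem_univ, true_and] at hstar'
    obtain ⟨i₀, hi₀⟩ := hstar'
    have hTsub : ∀ i, T i ⊆ insert star S := by
      intro i
      rw [← hcov]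
      exact Finset.subset_biUnion_of_mem T (Finset.mem_univ i)
    have hTi₀ : ∀ x ∈ T i₀, x = star := by
      intro x hx
      by_contra hne
      have hxS : x ∈ S := by
        have := hTsub i₀ hx
        simp only [Finset.mem_insert] at this
        exact this.resolve_left hne
      refine hsplit {x, star} (Or.inr ⟨x, hxS, rfl⟩) i₀ ?_
      intro y hy
      simp only [Finset.mem_insert, Finset.mem_singleton] at hy
      rcases hy with rfl | rfl
      · exact hx
      · exact hi₀
    refine ⟨fun i => T (i₀.succAbove i), ?_, ?_, ?_⟩
    · intro i j hij
      exact hdisj _ _ fun h => hij (Fin.succAbove_right_injective h)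
    · ext a
      simp only [Finset.mem_biUnion, Finset.mem_univ, true_and]
      constructor
      · rintro ⟨i, hi⟩
        have hne : i₀.succAbove i ≠ i₀ := Fin.succAbove_ne _ _
        have haS : a ∈ insert star S := hTsub _ hi
        simp only [Finset.mem_insert] at haS
        rcases haS with rfl | haS
        · exact absurd hi (Finset.disjoint_left.1 (hdisj i₀ _ (Ne.symm hne)) hi₀)
        · exact haS
      · intro ha
        have : a ∈ Finset.univ.biUnion T := by
          rw [hcov]; exact Finset.mem_insert_of_mem ha
        simp only [Finset.mem_biUnion, Finset.mem_univ, true_and] at this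
        obtain ⟨j, hj⟩ := this
        have hne : j ≠ i₀ := by
          rintro rfl
          exact hstar ((hTi₀ a hj) ▸ ha)
        obtain ⟨i, rfl⟩ := Fin.exists_succAbove_eq hne
        exact ⟨i, hj⟩
    · intro c hc i
      exact hsplit c (Or.inl hc) _
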